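/- Let U be a utility function on subsets of a finite set S of size n, and suppose the marginal contribution of element i to a coalition T (with i ∉ T) has the form U(T ∪ {i}) - U(T) = c_i + ⟨h_i, Σ_{k∈T} h_k⟩ for fixed scalars c_i and vectors h_i, h_k ∈ ℝ^m. Then the Shapley value of i equals φ_i = c_i + (1/2)⟨h_i, Σ_{k∈S, k≠i} h_k⟩. -/

import Mathlib

open scoped RealInnerProductSpace
open Finset

lemma sum_range_id_real (m : ℕ) : ∑ t ∈ range m, ((t : ℝ) + 1) = m * (m + 1) / 2 := by
  induction m with
  | zero => simp
  | succ n ih => rw [sum_range_succ, ih]; push_cast; ring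

lemma sumW {ι : Type*} (A : Finset ι) :
    ∑ T ∈ A.powerset, (1 / (A.card.choose T.card : ℝ)) = A.card + 1 := by
  classical
  rw [powerset_card_biUnion, sum_biUnion (fun i _ j _ hij => pairwise_disjoint_powersetCard A hij)]
  have : ∀ t ∈ range (A.card + 1),
      ∑ T ∈ A.powersetCard t, (1 / (A.card.choose T.card : ℝ)) = 1 := by
    intro t ht
    rw [mem_range] at ht
    have hpos : 0 < A.card.choose t := Nat.choose_pos (Nat.lt_succ_iff.mp ht)
    rw [Finset.sum_congr rfl (fun T hT => by
      rw [(mem_powersetCard.mp hT).2]), sum_const, card_powersetCard, nsmul_eq_mul]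
    field_simp
  rw [Finset.sum_congr rfl this]
  simp

lemma sumW2 {ι : Type*} (A : Finset ι) :
    ∑ T ∈ A.powerset, (1 / ((A.card + 1).choose (T.card + 1) : ℝ))
      = (A.card + 2) / 2 := by
  classical
  rw [powerset_card_biUnion, sum_biUnion (fun i _ j _ hij => pairwise_disjoint_powersetCard A hij)]
  have key : ∀ t ∈ range (A.card + 1),
      ∑ T ∈ A.powersetCard t, (1 / (((A.card + 1)).choose (T.card + 1) : ℝ))
        = ((t : ℝ) + 1) / (A.card + 1) := by
    intro t ht
    rw [mem_range, Nat.lt_succ_iff] at ht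
    rw [Finset.sum_congr rfl (fun T hT => by
      rw [(mem_powersetCard.mp hT).2]), sum_const, card_powersetCard, nsmul_eq_mul]
    have h1 : (A.card + 1) * A.card.choose t = (A.card + 1).choose (t + 1) * (t + 1) :=
      Nat.add_one_mul_choose_eq A.card t
    have hc : 0 < (A.card + 1).choose (t + 1) :=
      Nat.choose_pos (by omega)
    have h1' : ((A.card : ℝ) + 1) * A.card.choose t = (A.card + 1).choose (t + 1) * (t + 1) := by
      exact_mod_cast congrArg (Nat.cast : ℕ → ℝ) h1
    have hc' : ((A.card + 1).choose (t + 1) : ℝ) ≠ 0 := by positivity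
    have hn1 : (A.card : ℝ) + 1 ≠ 0 := by positivity
    field_simp
    linarith [h1']
  rw [Finset.sum_congr rfl key, ← Finset.sum_div, sum_range_id_real]
  have hn1 : (A.card : ℝ) + 1 ≠ 0 := by positivity
  field_simp
  push_cast
  ring

theorem stmt_11 {ι : Type*} [DecidableEq ι] {m : ℕ}
    (S : Finset ι) (i : ι) (hi : i ∈ S)
    (U : Finset ι → ℝ) (c : ℝ) (h : ι → EuclideanSpace ℝ (Fin m))
    (hU : ∀ T ⊆ S.erase i, U (insert i T) - U T = c + ⟪h i, ∑ k ∈ T, h k⟫) :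
    (1 / (S.card : ℝ)) * ∑ T ∈ (S.erase i).powerset,
        (1 / ((S.card - 1).choose T.card : ℝ)) * (U (insert i T) - U T)
      = c + (1 / 2) * ⟪h i, ∑ k ∈ S.erase i, h k⟫ := by
  set A := S.erase i with hAdef
  have hcardA : A.card = S.card - 1 := Finset.card_erase_of_mem hi
  have hScard : S.card = A.card + 1 := by
    have := Finset.card_pos.mpr ⟨i, hi⟩
    omega
  set g : ι → ℝ := fun k => ⟪h i, h k⟫ with hg
  -- rewrite marginal contributions
  have step1 : ∀ T ∈ A.powerset,
      (1 / ((S.card - 1).choose T.card : ℝ)) * (U (insert i T) - U T)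
        = (1 / (A.card.choose T.card : ℝ)) * (c + ∑ k ∈ T, g k) := by
    intro T hT
    rw [mem_powerset] at hT
    rw [hU T hT, ← hcardA, hg]
    simp [inner_sum]
  rw [Finset.sum_congr rfl step1]
  -- split the sum
  have split : ∑ T ∈ A.powerset, (1 / (A.card.choose T.card : ℝ)) * (c + ∑ k ∈ T, g k)
      = (∑ T ∈ A.powerset, (1 / (A.card.choose T.card : ℝ))) * c
        + ∑ T ∈ A.powerset, (1 / (A.card.choose T.card : ℝ)) * ∑ k ∈ T, g k := by
    rw [Finset.sum_mul]
    rw [← Finset.sum_add_distrib]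
    exact Finset.sum_congr rfl fun T _ => by ring
  rw [split, sumW]
  -- now the cross term
  have cross : ∑ T ∈ A.powerset, (1 / (A.card.choose T.card : ℝ)) * ∑ k ∈ T, g k
      = ∑ k ∈ A, ((A.card : ℝ) + 1) / 2 * g k := by
    have e1 : ∀ T ∈ A.powerset, (1 / (A.card.choose T.card : ℝ)) * ∑ k ∈ T, g k
        = ∑ k ∈ A, (if k ∈ T then (1 / (A.card.choose T.card : ℝ)) * g k else 0) := by
      intro T hT
      rw [mem_powerset] at hT
      rw [Finset.mul_sum, ← Finset.sum_filter, Finset.filter_mem_eq_inter,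
        Finset.inter_comm, Finset.inter_eq_left.mpr hT]
    rw [Finset.sum_congr rfl e1, Finset.sum_comm]
    refine Finset.sum_congr rfl fun k hk => ?_
    -- inner sum over T
    have hins : A = insert k (A.erase k) := (Finset.insert_erase hk).symm
    have hknot : k ∉ A.erase k := Finset.notMem_erase k A
    have hA1 : 1 ≤ A.card := Finset.card_pos.mpr ⟨k, hk⟩
    calc ∑ T ∈ A.powerset, (if k ∈ T then (1 / (A.card.choose T.card : ℝ)) * g k else 0)
        = ∑ T ∈ (A.erase k).powerset,
            (if k ∈ T then (1 / (A.card.choose T.card : ℝ)) * g k else 0)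
          + ∑ T ∈ (A.erase k).powerset,
            (if k ∈ insert k T then (1 / (A.card.choose (insert k T).card : ℝ)) * g k else 0) := by
          have e := Finset.sum_powerset_insert hknot (fun T => if k ∈ T then (1 / ((A.card.choose T.card : ℕ) : ℝ)) * g k else 0)
          rw [← hins] at e
          exact e
      _ = ∑ T ∈ (A.erase k).powerset, (1 / (A.card.choose (T.card + 1) : ℝ)) * g k := by
          have z1 : ∀ T ∈ (A.erase k).powerset,
              (if k ∈ T then (1 / (A.card.choose T.card : ℝ)) * g k else 0) = 0 := by
            intro T hT
            rw [mem_powerset] at hT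
            have : k ∉ T := fun hkT => hknot (hT hkT)
            simp [this]
          have z2 : ∀ T ∈ (A.erase k).powerset,
              (if k ∈ insert k T then (1 / (A.card.choose (insert k T).card : ℝ)) * g k else 0)
                = (1 / (A.card.choose (T.card + 1) : ℝ)) * g k := by
            intro T hT
            rw [mem_powerset] at hT
            have hkT : k ∉ T := fun hkT => hknot (hT hkT)
            rw [if_pos (Finset.mem_insert_self k T), Finset.card_insert_of_notMem hkT]
          rw [Finset.sum_congr rfl z1, Finset.sum_congr rfl z2, Finset.sum_const, smul_zero,
            zero_add]
      _ = ((A.card : ℝ) + 1) / 2 * g k := by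
          rw [← Finset.sum_mul]
          congr 1
          have hEc : (A.erase k).card + 1 = A.card := by
            rw [Finset.card_erase_of_mem hk]; omega
          have hs := sumW2 (A.erase k)
          rw [hEc] at hs
          rw [hs]
          have : ((A.erase k).card : ℝ) = (A.card : ℝ) - 1 := by
            rw [Finset.card_erase_of_mem hk]; push_cast [hA1]; ring
          rw [this]; ring
  rw [cross, ← Finset.mul_sum, hg]
  have hinner : ⟪h i, ∑ k ∈ A, h k⟫ = ∑ k ∈ A, ⟪h i, h k⟫ := inner_sum _ _ _
  rw [hinner]
  have hn : (S.card : ℝ) = (A.card : ℝ) + 1 := by rw [hScard]; push_cast; ring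
  rw [hn]
  have : ((A.card : ℝ) + 1) ≠ 0 := Nat.cast_add_one_ne_zero _
  field_simp
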